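/- For any real α ∈ (0,1) and integers r > s ≥ 1, there exist constants σ ∈ (0,1) and n₃ > 0 such that for all integers n ≥ n₃ and 1 ≤ t ≤ σ·n, N(n, t, r, s) − α·C(n−s, r−s) < N(n−1, t, r, s), where N(n,t,r,s) = C(n−s+1, r−s+1) − C(n−s+1−t, r−s+1). -/

import Mathlib

/-- `N(n,t,r,s) = C(n−s+1, r−s+1) − C(n−s+1−t, r−s+1)`. -/
def NN (n t r s : ℕ) : ℕ :=
  (n - s + 1).choose (r - s + 1) - (n - s + 1 - t).choose (r - s + 1)

set_option maxHeartbeats 1000000 in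
theorem stmt13 (α : ℝ) (hα0 : 0 < α) (hα1 : α < 1) (r s : ℕ) (hs : 1 ≤ s) (hrs : s < r) :
    ∃ σ : ℝ, ∃ n₃ : ℕ, 0 < σ ∧ σ < 1 ∧ 0 < n₃ ∧
      ∀ n t : ℕ, n₃ ≤ n → 1 ≤ t → (t : ℝ) ≤ σ * n →
        (NN n t r s : ℝ) - α * ((n - s).choose (r - s) : ℝ) < (NN (n - 1) t r s : ℝ) := by
  set k := r - s with hk
  have hk1 : 1 ≤ k := by omega
  have hk1' : (1:ℝ) ≤ (k:ℝ) := by exact_mod_cast hk1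
  have hkpos : (0:ℝ) < (k:ℝ) := by linarith
  refine ⟨α / (4 * k), ⌈8 * ((k:ℝ) + s) * k / α⌉₊ + 2 * s + 2 * k + 2, by positivity, ?_, by omega, ?_⟩
  · rw [div_lt_one (by positivity)]; nlinarith
  intro n t hn ht hts
  set m := n - s with hm
  have hsn : s + 1 ≤ n := by omega
  have hmn : (m:ℝ) = (n:ℝ) - s := by
    rw [hm, Nat.cast_sub (by omega)]
  have hs1 : (1:ℝ) ≤ (s:ℝ) := by exact_mod_cast hs
  have ht1 : (1:ℝ) ≤ (t:ℝ) := by exact_mod_cast ht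
  -- big n bound
  have hceil : (8 * ((k:ℝ) + s) * k / α) ≤ (n:ℝ) := by
    have hle : ⌈8 * ((k:ℝ) + s) * k / α⌉₊ ≤ n := by omega
    calc (8 * ((k:ℝ) + s) * k / α) ≤ (⌈8 * ((k:ℝ) + s) * k / α⌉₊ : ℝ) := Nat.le_ceil _
    _ ≤ (n:ℝ) := by exact_mod_cast hle
  have hnb : 8 * ((k:ℝ) + s) * k ≤ α * n := by
    rw [div_le_iff₀ hα0] at hceil; linarith
  have hts' : 4 * (k:ℝ) * t ≤ α * n := by
    have h4 : (0:ℝ) < 4 * k := by positivity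
    rw [div_mul_eq_mul_div, le_div_iff₀ h4] at hts
    nlinarith
  -- key real bound
  have hd2 : 2 * (k:ℝ) * ((t:ℝ) + k - 1) ≤ α * ((n:ℝ) - s) := by
    nlinarith [hts', hnb, hα0.le, hα1.le, hs1, hk1', ht1]
  set x : ℝ := α / (2 * k) with hx
  have hxm : x * (m:ℝ) = α * m / (2 * k) := by rw [hx]; ring
  have hmpos : (0:ℝ) ≤ (m:ℝ) := by positivity
  have hdx : (t:ℝ) + k - 1 ≤ x * m := by
    rw [hxm, le_div_iff₀ (by positivity)]
    rw [hmn]; nlinarith [hd2]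
  have hx12 : x ≤ 1 / 2 := by
    rw [hx, div_le_div_iff₀ (by positivity) (by norm_num)]
    nlinarith
  have hx0 : 0 < x := by positivity
  -- m is large
  have hm2 : 2 ≤ m := by omega
  have hm2' : (2:ℝ) ≤ (m:ℝ) := by exact_mod_cast hm2
  -- t + k ≤ m
  have htkm : t + k ≤ m := by
    have hxm2 : x * (m:ℝ) ≤ (1/2) * m := mul_le_mul_of_nonneg_right hx12 hmpos
    have : (t:ℝ) + k ≤ (m:ℝ) := by linarith [hdx, hm2']
    exact_mod_cast this
  have htm : t ≤ m := by omega
  set u := m - t with hu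
  have hum : (u:ℝ) = (m:ℝ) - t := by rw [hu, Nat.cast_sub htm]
  have huk : k ≤ u := by omega
  clear_value x u m k
  -- key combinatorial inequality : (1-α) C(m,k) < C(u,k)
  have hfac : (0:ℝ) < (k.factorial : ℝ) := by exact_mod_cast k.factorial_pos
  have h1 : ((m.choose k : ℕ) : ℝ) ≤ (m:ℝ) ^ k / k.factorial := by
    have := Nat.choose_le_pow_div (α := ℝ) k m
    simpa using this
  have h2 : (((u + 1 - k) ^ k : ℕ) : ℝ) / k.factorial ≤ (u.choose k : ℝ) := by
    have := Nat.pow_le_choose (α := ℝ) k u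
    exact_mod_cast this
  have h3 : ((u + 1 - k : ℕ) : ℝ) = (u:ℝ) + 1 - k := by
    rw [Nat.cast_sub (by omega)]; push_cast; ring
  have hB1 : (1:ℝ) - k * x ≤ (1 - x) ^ k := by
    have := one_add_mul_le_pow (a := -x) (by linarith) k
    have e : (1:ℝ) + ↑k * (-x) = 1 - k * x := by ring
    have e2 : (1:ℝ) + (-x) = 1 - x := by ring
    rw [e, e2] at this; exact this
  have hkill : (k:ℝ) * x = α / 2 := by
    rw [hx]; field_simp
  have hB2 : ((1 - x) * (m:ℝ)) ^ k ≤ ((u:ℝ) + 1 - k) ^ k := by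
    have h0 : (0:ℝ) ≤ (1 - x) * m := mul_nonneg (by linarith) hmpos
    have hab : (1 - x) * (m:ℝ) ≤ (u:ℝ) + 1 - k := by rw [hum]; linarith [hdx]
      
    exact pow_le_pow_left₀ h0 hab k
  have hmpow : (0:ℝ) < (m:ℝ) ^ k := by positivity
  have h4 : (1 - α) * (m:ℝ) ^ k < ((u:ℝ) + 1 - k) ^ k := by
    calc (1 - α) * (m:ℝ) ^ k < (1 - k * x) * (m:ℝ) ^ k := by
          rw [hkill]
          exact mul_lt_mul_of_pos_right (by linarith) hmpow
    _ ≤ (1 - x) ^ k * (m:ℝ) ^ k := by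
          apply mul_le_mul_of_nonneg_right hB1 (by positivity)
    _ = ((1 - x) * (m:ℝ)) ^ k := by rw [mul_pow]
    _ ≤ ((u:ℝ) + 1 - k) ^ k := hB2
  have hkey : (1 - α) * (m.choose k : ℝ) < (u.choose k : ℝ) := by
    have hl : (1 - α) * (m.choose k : ℝ) ≤ (1 - α) * ((m:ℝ) ^ k / k.factorial) :=
      mul_le_mul_of_nonneg_left h1 (by linarith)
    have hr : ((u:ℝ) + 1 - k) ^ k / k.factorial ≤ (u.choose k : ℝ) := by
      rw [← h3]; exact_mod_cast h2
    have hmid : (1 - α) * ((m:ℝ) ^ k / k.factorial) < ((u:ℝ) + 1 - k) ^ k / k.factorial := by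
      rw [← mul_div_assoc]
      exact div_lt_div_of_pos_right h4 hfac
    linarith
  -- rewrite NN in terms of m, u
  have e1 : NN n t r s = (m + 1).choose (k + 1) - (u + 1).choose (k + 1) := by
    rw [NN]
    have a2 : n - s + 1 - t = u + 1 := by omega
    have a1 : n - s + 1 = m + 1 := by omega
    have a3 : r - s + 1 = k + 1 := by omega
    rw [a2, a1, a3]
  have e2 : NN (n - 1) t r s = m.choose (k + 1) - u.choose (k + 1) := by
    rw [NN]
    have e4 : n - 1 - s + 1 - t = u := by omega
    have e3 : n - 1 - s + 1 = m := by omega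
    have a3 : r - s + 1 = k + 1 := by omega
    rw [e4, e3, a3]
  have c1 : (NN n t r s : ℝ) = ((m + 1).choose (k + 1) : ℝ) - ((u + 1).choose (k + 1) : ℝ) := by
    rw [e1, Nat.cast_sub (Nat.choose_le_choose _ (by omega))]
  have c2 : (NN (n - 1) t r s : ℝ) = (m.choose (k + 1) : ℝ) - (u.choose (k + 1) : ℝ) := by
    rw [e2, Nat.cast_sub (Nat.choose_le_choose _ (by omega))]
  have p1 : (m + 1).choose (k + 1) = m.choose k + m.choose (k + 1) := Nat.choose_succ_succ m k
  have p2 : (u + 1).choose (k + 1) = u.choose k + u.choose (k + 1) := Nat.choose_succ_succ u k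
  rw [c1, c2, p1, p2]
  push_cast
  linarith [hkey]
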